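/- The subspaces H₀ and H₄ are orthogonal with respect to the scalar product (a,b) = ∫ab (i.e. ∫xy = 0 for all x ∈ H₀, y ∈ H₄); consequently, if the scalar product (a,b) = ∫ab is nondegenerate on H (axiom A7), then its restriction to H₀ is nondegenerate. -/

import Mathlib

/-- the subspaces `H₀` and `H₄` are orthogonal with respect to the
scalar product `(x,y) = ∫xy` (i.e. `∫xy = 0` for `x ∈ H₀`, `y ∈ H₄`); consequently,
if the scalar product is nondegenerate on `H` (axiom A7), then its restriction to
`H₀` is nondegenerate.  Setting: `H` is a ℤ₂-graded supercommutative associative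
unital ℂ-algebra with operators `Q, G₋, G₊` as in axioms A1, A2 and the definition
of `G₊`, and the even linear functional `I = ∫` satisfies axiom A6;
`H₄ = ⨆ α, span {e α, Q e α, G₋ e α, Q G₋ e α}`. -/
theorem H0_H4_orthogonal_and_nondegeneracy_restricts
    {H : Type*} [Ring H] [Algebra ℂ H]
    (Hhom : ZMod 2 → Submodule ℂ H)
    (hinternal : DirectSum.IsInternal Hhom)
    (hone : (1 : H) ∈ Hhom 0)
    (hmul : ∀ (p q : ZMod 2) (a b : H), a ∈ Hhom p → b ∈ Hhom q → a * b ∈ Hhom (p + q))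
    (hsupercomm : ∀ (p q : ZMod 2) (a b : H), a ∈ Hhom p → b ∈ Hhom q →
      a * b = ((-1 : ℂ) ^ (p.val * q.val)) • (b * a))
    (Q Gm Gp : H →ₗ[ℂ] H)
    (H0 : Submodule ℂ H) {ι : Type*} (e : ι → H)
    (hQ2 : Q ∘ₗ Q = 0) (hGm2 : Gm ∘ₗ Gm = 0) (hQGm : Q ∘ₗ Gm + Gm ∘ₗ Q = 0)
    (hQ0 : ∀ x ∈ H0, Q x = 0) (hGm0 : ∀ x ∈ H0, Gm x = 0)
    (hindep : ∀ α : ι, LinearIndependent ℂ ![e α, Q (e α), Gm (e α), Q (Gm (e α))])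
    (hdirect : iSupIndep (fun o : Option ι => o.elim H0 fun α =>
      Submodule.span ℂ {e α, Q (e α), Gm (e α), Q (Gm (e α))}))
    (hspan : H0 ⊔ (⨆ α : ι, Submodule.span ℂ {e α, Q (e α), Gm (e α), Q (Gm (e α))}) = ⊤)
    (hGp0 : ∀ x ∈ H0, Gp x = 0)
    (hGpe : ∀ α : ι, Gp (e α) = 0)
    (hGpGme : ∀ α : ι, Gp (Gm (e α)) = 0)
    (hGpQe : ∀ α : ι, Gp (Q (e α)) = e α)
    (hGpQGme : ∀ α : ι, Gp (Q (Gm (e α))) = Gm (e α))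
    (hQodd : ∀ (p : ZMod 2) (a : H), a ∈ Hhom p → Q a ∈ Hhom (p + 1))
    (hGmodd : ∀ (p : ZMod 2) (a : H), a ∈ Hhom p → Gm a ∈ Hhom (p + 1))
    (hGpodd : ∀ (p : ZMod 2) (a : H), a ∈ Hhom p → Gp a ∈ Hhom (p + 1))
    (I : H →ₗ[ℂ] ℂ)
    (hIeven : ∀ a ∈ Hhom 1, I a = 0)
    (hIQ : ∀ (p : ZMod 2) (a : H), a ∈ Hhom p → ∀ b : H,
      I (Q a * b) = ((-1 : ℂ) ^ (p.val + 1)) * I (a * Q b))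
    (hIGm : ∀ (p : ZMod 2) (a : H), a ∈ Hhom p → ∀ b : H,
      I (Gm a * b) = ((-1 : ℂ) ^ p.val) * I (a * Gm b))
    (hIGp : ∀ (p : ZMod 2) (a : H), a ∈ Hhom p → ∀ b : H,
      I (Gp a * b) = ((-1 : ℂ) ^ p.val) * I (a * Gp b)) :
    (∀ x ∈ H0, ∀ y ∈ (⨆ α : ι, Submodule.span ℂ {e α, Q (e α), Gm (e α), Q (Gm (e α))}),
      I (x * y) = 0) ∧
    ((∀ x : H, (∀ y : H, I (x * y) = 0) → x = 0) →
      ∀ x ∈ H0, (∀ y ∈ H0, I (x * y) = 0) → x = 0) := by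

  classical
  have hsup : Hhom 0 ⊔ Hhom 1 = ⊤ := by
    have h := hinternal.submodule_iSup_eq_top
    rw [← h]
    apply le_antisymm
    · exact sup_le (le_iSup _ 0) (le_iSup _ 1)
    · apply iSup_le; intro i
      fin_cases i
      · exact le_sup_left
      · exact le_sup_right
  have hdisj : Disjoint (Hhom 0) (Hhom 1) :=
    hinternal.submodule_iSupIndep.pairwiseDisjoint (by decide)
  have h11 : (1 + 1 : ZMod 2) = 0 := by decide
  -- killing components of an odd operator
  have hkill : ∀ (T : H →ₗ[ℂ] H),
      (∀ (p : ZMod 2) (a : H), a ∈ Hhom p → T a ∈ Hhom (p + 1)) →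
      ∀ x0 x1 : H, x0 ∈ Hhom 0 → x1 ∈ Hhom 1 → T (x0 + x1) = 0 →
      T x0 = 0 ∧ T x1 = 0 := by
    intro T hT x0 x1 h0 h1 hsum
    have h0' : T x0 ∈ Hhom 1 := by simpa using hT 0 x0 h0
    have h1' : T x1 ∈ Hhom 0 := by
      have := hT 1 x1 h1
      rwa [h11] at this
    rw [map_add] at hsum
    have e0 : T x0 = -(T x1) := by
      have := eq_neg_of_add_eq_zero_left hsum
      exact this
    have hmem0 : T x0 ∈ Hhom 0 := by
      rw [e0]; exact (Hhom 0).neg_mem h1'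
    have hz : T x0 = 0 := Submodule.disjoint_def.mp hdisj _ hmem0 h0'
    refine ⟨hz, ?_⟩
    rw [hz, zero_add] at hsum
    exact hsum
  -- for homogeneous a with Q a = 0 : I (a * Q w) = 0
  have hQzero : ∀ (p : ZMod 2) (a : H), a ∈ Hhom p → Q a = 0 →
      ∀ w : H, I (a * Q w) = 0 := by
    intro p a ha hQa w
    have hw : w ∈ Hhom 0 ⊔ Hhom 1 := by rw [hsup]; exact Submodule.mem_top
    obtain ⟨w0, hw0, w1, hw1, rfl⟩ := Submodule.mem_sup.mp hw
    have key : ∀ (q : ZMod 2) (u : H), u ∈ Hhom q → I (a * Q u) = 0 := by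
      intro q u hu
      have hQu : Q u ∈ Hhom (q + 1) := hQodd q u hu
      have hc := hsupercomm p (q + 1) a (Q u) ha hQu
      rw [hc, map_smul, smul_eq_mul, hIQ q u hu a, hQa, mul_zero, map_zero,
        mul_zero, mul_zero]
    rw [map_add, mul_add, map_add, key 0 w0 hw0, key 1 w1 hw1, add_zero]
  -- for homogeneous a with Gp a = 0 : I (a * Gp w) = 0
  have hGpzero : ∀ (p : ZMod 2) (a : H), a ∈ Hhom p → Gp a = 0 →
      ∀ w : H, I (a * Gp w) = 0 := by
    intro p a ha hGpa w
    have hw : w ∈ Hhom 0 ⊔ Hhom 1 := by rw [hsup]; exact Submodule.mem_top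
    obtain ⟨w0, hw0, w1, hw1, rfl⟩ := Submodule.mem_sup.mp hw
    have key : ∀ (q : ZMod 2) (u : H), u ∈ Hhom q → I (a * Gp u) = 0 := by
      intro q u hu
      have hGu : Gp u ∈ Hhom (q + 1) := hGpodd q u hu
      have hc := hsupercomm p (q + 1) a (Gp u) ha hGu
      rw [hc, map_smul, smul_eq_mul, hIGp q u hu a, hGpa, mul_zero, map_zero,
        mul_zero, mul_zero]
    rw [map_add, mul_add, map_add, key 0 w0 hw0, key 1 w1 hw1, add_zero]
  -- main lemma for arbitrary x with Q x = 0, Gp x = 0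
  have main : ∀ x : H, Q x = 0 → Gp x = 0 →
      ∀ y ∈ (⨆ α : ι, Submodule.span ℂ
        ({e α, Q (e α), Gm (e α), Q (Gm (e α))} : Set H)), I (x * y) = 0 := by
    intro x hQx hGpx y hy
    have hx : x ∈ Hhom 0 ⊔ Hhom 1 := by rw [hsup]; exact Submodule.mem_top
    obtain ⟨x0, hx0, x1, hx1, rfl⟩ := Submodule.mem_sup.mp hx
    obtain ⟨hQx0, hQx1⟩ := hkill Q hQodd x0 x1 hx0 hx1 hQx
    obtain ⟨hGpx0, hGpx1⟩ := hkill Gp hGpodd x0 x1 hx0 hx1 hGpx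
    -- for each homogeneous component, I (a * y) = 0 for y in H4
    have homMain : ∀ (p : ZMod 2) (a : H), a ∈ Hhom p → Q a = 0 → Gp a = 0 →
        I (a * y) = 0 := by
      intro p a ha hQa hGpa
      set L : H →ₗ[ℂ] ℂ := I.comp (LinearMap.mulLeft ℂ a) with hL
      have hLy : y ∈ LinearMap.ker L := by
        have hle : (⨆ α : ι, Submodule.span ℂ
            ({e α, Q (e α), Gm (e α), Q (Gm (e α))} : Set H)) ≤ LinearMap.ker L := by
          apply iSup_le
          intro α
          rw [Submodule.span_le]
          intro z hz
          simp only [Set.mem_insert_iff, Set.mem_singleton_iff] at hz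
          have hLz : L z = I (a * z) := rfl
          rcases hz with rfl | rfl | rfl | rfl
          · show L _ = 0
            rw [hLz, ← hGpQe α]
            exact hGpzero p a ha hGpa _
          · show L _ = 0
            rw [hLz]
            exact hQzero p a ha hQa _
          · show L _ = 0
            rw [hLz, ← hGpQGme α]
            exact hGpzero p a ha hGpa _
          · show L _ = 0
            rw [hLz]
            exact hQzero p a ha hQa _
        exact hle hy
      exact hLy
    have h0 := homMain 0 x0 hx0 hQx0 hGpx0
    have h1 := homMain 1 x1 hx1 hQx1 hGpx1
    rw [add_mul, map_add, h0, h1, add_zero]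
  constructor
  · intro x hx y hy
    exact main x (hQ0 x hx) (hGp0 x hx) y hy
  · intro hnd x hx hxH0
    apply hnd
    intro y
    have hy : y ∈ H0 ⊔ (⨆ α : ι, Submodule.span ℂ
        ({e α, Q (e α), Gm (e α), Q (Gm (e α))} : Set H)) := by
      rw [hspan]; exact Submodule.mem_top
    obtain ⟨y0, hy0, y4, hy4, rfl⟩ := Submodule.mem_sup.mp hy
    rw [mul_add, map_add, hxH0 y0 hy0, main x (hQ0 x hx) (hGp0 x hx) y4 hy4, add_zero]
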